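/- There exists a constant β_v with 0 < β_v ≤ 1 such that for every (c,a) ∈ K^{d-1} one has max_{0≤j≤d−2} |P_{c,a}(c_j)|_v ≥ β_v · max{|c|_v, |a|_v}^d. -/

import Mathlib

open Filter

noncomputable section

variable {K : Type*} [Field K]

/-- Elementary symmetric polynomial of degree `k` evaluated at `c = (c_1, …, c_{d-2})`. -/
def esymmK {n : ℕ} (c : Fin n → K) (k : ℕ) : K :=
  ∑ s ∈ Finset.powersetCard k (Finset.univ : Finset (Fin n)), ∏ i ∈ s, c i

/-- The polynomial `P_{c,a}` of degree `d = n + 2`: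
`P_{c,a}(z) = z^d/d + ∑_{j=2}^{d-1} (-1)^{d-j} σ_{d-j}(c) z^j / j + a^d`. -/
def Pca {n : ℕ} (c : Fin n → K) (a z : K) : K :=
  z ^ (n + 2) / ((n + 2 : ℕ) : K)
    + ∑ j ∈ Finset.Icc 2 (n + 1),
        ((-1 : K) ^ (n + 2 - j) * esymmK c (n + 2 - j) * z ^ j) / ((j : ℕ) : K)
    + a ^ (n + 2)

/-- The critical points `c_0 = 0, c_1, …, c_{d-2}` of `P_{c,a}`. -/
def crit {n : ℕ} (c : Fin n → K) (i : Fin (n + 1)) : K :=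
  if h : (i : ℕ) = 0 then 0 else c ⟨(i : ℕ) - 1, by have := i.isLt; omega⟩

/-- `|c|_v = max_{1 ≤ i ≤ d-2} |c_i|_v` (with value `0` when there are no `c_i`'s). -/
def cnorm {n : ℕ} (v : AbsoluteValue K ℝ) (c : Fin n → K) : ℝ :=
  Finset.fold max 0 (fun i => v (c i)) (Finset.univ : Finset (Fin n))

/-- `α_v = max_{1 ≤ j ≤ d} |j|_v⁻¹`. -/
def alphaV (v : AbsoluteValue K ℝ) (d : ℕ) : ℝ :=
  Finset.fold max 0 (fun j : ℕ => (v ((j : ℕ) : K))⁻¹) (Finset.Icc 1 d)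

/-- `C_v(c,a) = max{ |d|_v^{1/(d-1)}, |d|_v^{1/d}·|a|_v,
max_{2≤j≤d-1} (|σ_{d-j}(c)|_v · |d/j|_v)^{1/(d-j)} }`, with `d = n + 2`. -/
def Cv {n : ℕ} (v : AbsoluteValue K ℝ) (c : Fin n → K) (a : K) : ℝ :=
  max ((v (((n + 2 : ℕ) : K))) ^ ((1 : ℝ) / ((n : ℝ) + 1)))
    (max ((v (((n + 2 : ℕ) : K))) ^ ((1 : ℝ) / ((n : ℝ) + 2)) * v a)
      (Finset.fold max 0
        (fun j : ℕ =>
          (v (esymmK c (n + 2 - j)) * v (((n + 2 : ℕ) : K) / ((j : ℕ) : K)))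
            ^ ((1 : ℝ) / ((n + 2 - j : ℕ) : ℝ)))
        (Finset.Icc 2 (n + 1))))

/-- `C̃_v(c,a) = max{ |a|_v, |c|_v, C_v(c,a) }`. -/
def Ctilde {n : ℕ} (v : AbsoluteValue K ℝ) (c : Fin n → K) (a : K) : ℝ :=
  max (v a) (max (cnorm v c) (Cv v c a))

/-- `h_{c,a,v}(z) = log max{ C̃_v(c,a), |z|_v }`. -/
def hca {n : ℕ} (v : AbsoluteValue K ℝ) (c : Fin n → K) (a : K) (z : K) : ℝ :=
  Real.log (max (Ctilde v c a) (v z))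

/-- `log⁺ = max{0, log}`. -/
def logPlus (x : ℝ) : ℝ := max 0 (Real.log x)

/-- `U_i(ε, C) = {(c,a) : max{|c|_v,|a|_v} ≥ C and |P_{c,a}(c_i)|_v ≥ ε·max{|c|_v,|a|_v}^d}`. -/
def Uset {n : ℕ} (v : AbsoluteValue K ℝ) (i : Fin (n + 1)) (ε C : ℝ) :
    Set ((Fin n → K) × K) :=
  {p | C ≤ max (cnorm v p.1) (v p.2) ∧
       ε * max (cnorm v p.1) (v p.2) ^ (n + 2) ≤ v (Pca p.1 p.2 (crit p.1 i))}

namespace St9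

open Finset Polynomial

/-! ### Elementary lemmas about `esymmK`, `crit`, `cnorm`, `Pca` -/

lemma esymmK_zero {n : ℕ} (c : Fin n → K) : esymmK c 0 = 1 := by
  simp [esymmK]

lemma esymmK_smul {n : ℕ} (t : K) (c : Fin n → K) (k : ℕ) :
    esymmK (fun j => t * c j) k = t ^ k * esymmK c k := by
  rw [esymmK, esymmK, Finset.mul_sum]
  refine Finset.sum_congr rfl fun s hs => ?_
  rw [Finset.prod_mul_distrib, Finset.prod_const, (Finset.mem_powersetCard.mp hs).2]

lemma crit_zero {n : ℕ} (c : Fin n → K) : crit c 0 = 0 := by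
  simp [crit]

lemma crit_succ {n : ℕ} (c : Fin n → K) (j : Fin n) : crit c j.succ = c j := by
  rw [crit, dif_neg (by simp)]
  congr 1

lemma crit_smul {n : ℕ} (t : K) (c : Fin n → K) (i : Fin (n + 1)) :
    crit (fun j => t * c j) i = t * crit c i := by
  by_cases h : (i : ℕ) = 0 <;> simp [crit, h]

lemma Pca_zero_right {n : ℕ} (c : Fin n → K) (a : K) : Pca c a 0 = a ^ (n + 2) := by
  have hz : ∀ j ∈ Finset.Icc 2 (n + 1),
      ((-1 : K) ^ (n + 2 - j) * esymmK c (n + 2 - j) * (0 : K) ^ j) / ((j : ℕ) : K) = 0 := by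
    intro j hj
    have hj0 : j ≠ 0 := by have := (Finset.mem_Icc.mp hj).1; omega
    rw [zero_pow hj0, mul_zero, zero_div]
  rw [Pca, Finset.sum_eq_zero hz, zero_pow (by omega : n + 2 ≠ 0), zero_div, zero_add, zero_add]

lemma Pca_smul {n : ℕ} (t : K) (c : Fin n → K) (a z : K) :
    Pca (fun j => t * c j) (t * a) (t * z) = t ^ (n + 2) * Pca c a z := by
  rw [Pca, Pca, mul_add, mul_add, Finset.mul_sum]
  congr 1
  · congr 1
    · rw [mul_pow, mul_div_assoc]
    · refine Finset.sum_congr rfl fun j hj => ?_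
      obtain ⟨h2j, hjn⟩ := Finset.mem_Icc.mp hj
      have hpow : t ^ (n + 2 - j) * t ^ j = t ^ (n + 2) := by
        rw [← pow_add]
        congr 1
        omega
      rw [esymmK_smul, mul_pow, div_eq_mul_inv, div_eq_mul_inv]
      calc ((-1 : K) ^ (n + 2 - j) * (t ^ (n + 2 - j) * esymmK c (n + 2 - j))
              * (t ^ j * z ^ j)) * ((j : ℕ) : K)⁻¹
          = (t ^ (n + 2 - j) * t ^ j)
              * ((-1 : K) ^ (n + 2 - j) * esymmK c (n + 2 - j) * z ^ j * ((j : ℕ) : K)⁻¹) := by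
            ring
        _ = t ^ (n + 2)
              * ((-1 : K) ^ (n + 2 - j) * esymmK c (n + 2 - j) * z ^ j * ((j : ℕ) : K)⁻¹) := by
            rw [hpow]
  · rw [mul_pow]

lemma cnorm_nonneg {n : ℕ} (v : AbsoluteValue K ℝ) (c : Fin n → K) : 0 ≤ cnorm v c :=
  (Finset.le_fold_max _).mpr (Or.inl le_rfl)

lemma v_le_cnorm {n : ℕ} (v : AbsoluteValue K ℝ) (c : Fin n → K) (i : Fin n) :
    v (c i) ≤ cnorm v c :=
  (Finset.le_fold_max _).mpr (Or.inr ⟨i, Finset.mem_univ i, le_rfl⟩)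

lemma fold_max_attained {ι : Type*} (f : ι → ℝ) (s : Finset ι) :
    Finset.fold max 0 f s = 0 ∨ ∃ i ∈ s, Finset.fold max 0 f s = f i := by
  classical
  induction s using Finset.cons_induction with
  | empty => exact Or.inl Finset.fold_empty
  | cons a s ha ih =>
    rw [Finset.fold_cons]
    rcases le_total (f a) (Finset.fold max 0 f s) with h | h
    · rw [max_eq_right h]
      rcases ih with h0 | ⟨i, hi, he⟩
      · exact Or.inl h0
      · exact Or.inr ⟨i, Finset.mem_cons.mpr (Or.inr hi), he⟩
    · rw [max_eq_left h]
      exact Or.inr ⟨a, Finset.mem_cons_self a s, rfl⟩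

lemma cnorm_attained {n : ℕ} (v : AbsoluteValue K ℝ) (c : Fin n → K) :
    cnorm v c = 0 ∨ ∃ i : Fin n, cnorm v c = v (c i) := by
  rcases fold_max_attained (fun i => v (c i)) (Finset.univ : Finset (Fin n)) with h | ⟨i, _, h⟩
  · exact Or.inl h
  · exact Or.inr ⟨i, h⟩

/-! ### Ultrametric sums and polynomial evaluation bounds -/

lemma v_sum_le {ι : Type*} (v : AbsoluteValue K ℝ)
    (hv : ∀ x y : K, v (x + y) ≤ max (v x) (v y))
    (s : Finset ι) (f : ι → K) {B : ℝ} (hB : 0 ≤ B)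
    (h : ∀ i ∈ s, v (f i) ≤ B) : v (∑ i ∈ s, f i) ≤ B := by
  classical
  induction s using Finset.cons_induction with
  | empty => simpa using hB
  | cons a s ha ih =>
    rw [Finset.sum_cons]
    refine le_trans (hv _ _) (max_le (h a (Finset.mem_cons_self a s)) ?_)
    exact ih fun i hi => h i (Finset.mem_cons.mpr (Or.inr hi))

lemma eval_bound {σ : Type*} (v : AbsoluteValue K ℝ)
    (hv : ∀ x y : K, v (x + y) ≤ max (v x) (v y))
    (g : MvPolynomial σ K) :
    ∃ B : ℝ, 1 ≤ B ∧ ∀ x : σ → K, (∀ j, v (x j) ≤ 1) →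
      v (MvPolynomial.eval x g) ≤ B := by
  induction g using MvPolynomial.induction_on with
  | C r =>
    exact ⟨max 1 (v r), le_max_left _ _, fun x _ => by
      rw [MvPolynomial.eval_C]; exact le_max_right _ _⟩
  | add p q hp hq =>
    obtain ⟨B1, hB1, h1⟩ := hp
    obtain ⟨B2, hB2, h2⟩ := hq
    refine ⟨max B1 B2, le_trans hB1 (le_max_left _ _), fun x hx => ?_⟩
    rw [map_add]
    exact le_trans (hv _ _) (max_le_max (h1 x hx) (h2 x hx))
  | mul_X p m hp =>
    obtain ⟨B, hB, h1⟩ := hp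
    refine ⟨B, hB, fun x hx => ?_⟩
    rw [map_mul, MvPolynomial.eval_X, v.map_mul]
    calc v (MvPolynomial.eval x p) * v (x m) ≤ B * 1 :=
          mul_le_mul (h1 x hx) (hx m) (v.nonneg _) (le_trans zero_le_one hB)
      _ = B := mul_one B

/-! ### Vieta's formula -/

lemma vieta {n : ℕ} (c : Fin n → K) :
    (∏ i : Fin n, (X - C (c i))) =
      ∑ k ∈ Finset.range (n + 1), C ((-1 : K) ^ k * esymmK c k) * X ^ (n - k) := by
  have h0 : ∀ i ∈ (Finset.univ : Finset (Fin n)), (X - C (c i) : K[X]) = -C (c i) + X :=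
    fun i _ => by ring
  rw [Finset.prod_congr rfl h0, Finset.prod_add,
    Finset.sum_powerset, Finset.card_univ, Fintype.card_fin]
  refine Finset.sum_congr rfl fun k hk => ?_
  have hterm : ∀ t ∈ Finset.powersetCard k (Finset.univ : Finset (Fin n)),
      (∏ i ∈ t, -C (c i)) * ∏ _i ∈ Finset.univ \ t, (X : K[X])
        = C ((-1 : K) ^ k * ∏ i ∈ t, c i) * X ^ (n - k) := by
    intro t ht
    obtain ⟨hts, htc⟩ := Finset.mem_powersetCard.mp ht
    rw [Finset.prod_const, Finset.card_sdiff_of_subset hts, Finset.card_univ, Fintype.card_fin, htc]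
    congr 1
    calc (∏ i ∈ t, -C (c i)) = ∏ i ∈ t, (-1 : K[X]) * C (c i) := by
          refine Finset.prod_congr rfl fun i _ => by ring
      _ = (-1 : K[X]) ^ t.card * ∏ i ∈ t, C (c i) := by
          rw [Finset.prod_mul_distrib, Finset.prod_const]
      _ = C ((-1 : K) ^ k * ∏ i ∈ t, c i) := by
          rw [htc, map_mul, map_prod, map_pow, map_neg, map_one]
  rw [Finset.sum_congr rfl hterm, ← Finset.sum_mul]
  congr 1
  rw [← map_sum, ← Finset.mul_sum, esymmK]

/-! ### The key algebraic fact: all critical values vanish only at the origin -/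

lemma only_zero {n : ℕ} [CharZero K] (c : Fin n → K) (a : K)
    (h : ∀ i : Fin (n + 1), Pca c a (crit c i) = 0) : c = 0 ∧ a = 0 := by
  classical
  have ha : a = 0 := by
    have h0 := h 0
    rw [crit_zero, Pca_zero_right] at h0
    exact (pow_eq_zero_iff (by omega : n + 2 ≠ 0)).mp h0
  subst ha
  refine ⟨?_, rfl⟩
  have hd : ((n + 2 : ℕ) : K) ≠ 0 := Nat.cast_ne_zero.mpr (by omega)
  set q : K[X] := C (((n + 2 : ℕ) : K))⁻¹ * X ^ (n + 2)
      + ∑ j ∈ Finset.Icc 2 (n + 1),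
          C ((-1 : K) ^ (n + 2 - j) * esymmK c (n + 2 - j) * ((j : ℕ) : K)⁻¹) * X ^ j
    with hq_def
  have heval : ∀ z : K, q.eval z = Pca c 0 z := by
    intro z
    rw [hq_def, Pca, zero_pow (by omega : n + 2 ≠ 0), add_zero, Polynomial.eval_add,
      Polynomial.eval_finset_sum]
    congr 1
    · rw [Polynomial.eval_mul, Polynomial.eval_pow, Polynomial.eval_C, Polynomial.eval_X,
        div_eq_mul_inv, mul_comm]
    · refine Finset.sum_congr rfl fun j hj => ?_
      rw [Polynomial.eval_mul, Polynomial.eval_pow, Polynomial.eval_C, Polynomial.eval_X,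
        div_eq_mul_inv]
      ring
  have hrange : Finset.range (n + 1) = insert 0 (Finset.Icc 1 n) := by
    ext m
    simp only [Finset.mem_range, Finset.mem_insert, Finset.mem_Icc]
    omega
  have hq' : derivative q
      = ∑ k ∈ Finset.range (n + 1), C ((-1 : K) ^ k * esymmK c k) * X ^ (n + 1 - k) := by
    rw [hq_def, derivative_add, derivative_C_mul_X_pow, derivative_sum, hrange,
      Finset.sum_insert (by simp)]
    congr 1
    · rw [inv_mul_cancel₀ hd, pow_zero, esymmK_zero, mul_one, map_one]
      norm_num
    · refine Finset.sum_nbij' (fun j => n + 2 - j) (fun k => n + 2 - k) ?_ ?_ ?_ ?_ ?_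
      · intro a ha
        have := Finset.mem_Icc.mp ha
        show n + 2 - a ∈ Finset.Icc 1 n
        rw [Finset.mem_Icc]
        omega
      · intro a ha
        have := Finset.mem_Icc.mp ha
        show n + 2 - a ∈ Finset.Icc 2 (n + 1)
        rw [Finset.mem_Icc]
        omega
      · intro a ha
        have := Finset.mem_Icc.mp ha
        show n + 2 - (n + 2 - a) = a
        omega
      · intro a ha
        have := Finset.mem_Icc.mp ha
        show n + 2 - (n + 2 - a) = a
        omega
      · intro j hj
        obtain ⟨h2, hle⟩ := Finset.mem_Icc.mp hj
        have hjne : ((j : ℕ) : K) ≠ 0 := Nat.cast_ne_zero.mpr (by omega)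
        have hexp : n + 1 - (n + 2 - j) = j - 1 := by omega
        show derivative (C ((-1 : K) ^ (n + 2 - j) * esymmK c (n + 2 - j) * ((j : ℕ) : K)⁻¹) * X ^ j)
          = C ((-1 : K) ^ (n + 2 - j) * esymmK c (n + 2 - j)) * X ^ (n + 1 - (n + 2 - j))
        rw [derivative_C_mul_X_pow, mul_assoc, inv_mul_cancel₀ hjne, mul_one, hexp]
  have hXprod : (X : K[X]) * ∏ i : Fin n, (X - C (c i)) =
      ∑ k ∈ Finset.range (n + 1), C ((-1 : K) ^ k * esymmK c k) * X ^ (n + 1 - k) := by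
    rw [vieta, Finset.mul_sum]
    refine Finset.sum_congr rfl fun k hk => ?_
    have hk' : k ≤ n := by have := Finset.mem_range.mp hk; omega
    have hs : n + 1 - k = (n - k) + 1 := by omega
    rw [hs, pow_succ]
    ring
  have hprodsucc : (∏ i : Fin (n + 1), (X - C (crit c i))) =
      (X : K[X]) * ∏ i : Fin n, (X - C (c i)) := by
    rw [Fin.prod_univ_succ]
    have h1 : (X - C (crit c 0) : K[X]) = X := by rw [crit_zero, map_zero, sub_zero]
    have h2 : (∏ i : Fin n, (X - C (crit c i.succ))) = ∏ i : Fin n, (X - C (c i)) :=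
      Finset.prod_congr rfl fun i _ => by rw [crit_succ]
    rw [h1, h2]
  have hDq : derivative q = ∏ i : Fin (n + 1), (X - C (crit c i)) := by
    rw [hq', hprodsucc, hXprod]
  have hqd_eq : (∏ i : Fin (n + 1), (X - C (crit c i))) =
      ((Finset.univ.val.map (crit c)).map fun w => X - C w).prod := by
    rw [Multiset.map_map, Finset.prod_eq_multiset_prod]
    rfl
  have hmonic : (derivative q).Monic := by
    rw [hDq]
    exact Polynomial.monic_prod_of_monic _ _ fun i _ => Polynomial.monic_X_sub_C _
  have hq0 : q ≠ 0 := by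
    intro h0
    have hm : (derivative q).Monic := hmonic
    rw [h0, derivative_zero] at hm
    exact hm.ne_zero rfl
  have hdeg : q.natDegree ≤ n + 2 := by
    rw [hq_def]
    refine le_trans (Polynomial.natDegree_add_le _ _) (max_le ?_ ?_)
    · exact le_trans (Polynomial.natDegree_C_mul_le _ _) (Polynomial.natDegree_X_pow _).le
    · refine Polynomial.natDegree_sum_le_of_forall_le _ _ fun j hj => ?_
      refine le_trans (Polynomial.natDegree_C_mul_le _ _) ?_
      rw [Polynomial.natDegree_X_pow]
      have := (Finset.mem_Icc.mp hj).2
      omega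
  have hroots : (derivative q).roots = Finset.univ.val.map (crit c) := by
    rw [hDq, hqd_eq, Polynomial.roots_multiset_prod_X_sub_C]
  have hisroot : ∀ i : Fin (n + 1), q.IsRoot (crit c i) := by
    intro i
    rw [Polynomial.IsRoot, heval]
    exact h i
  set M : Multiset K := Finset.univ.val.map (crit c) with hM
  set S : Finset K := M.toFinset with hS
  have hcardM : Multiset.card M = n + 1 := by
    rw [hM, Multiset.card_map]
    simp
  have hSsub : S ⊆ q.roots.toFinset := by
    intro w hw
    rw [Multiset.mem_toFinset] at hw ⊢
    rw [Polynomial.mem_roots hq0]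
    obtain ⟨i, _, rfl⟩ := Multiset.mem_map.mp hw
    exact hisroot i
  have h1 : ∑ w ∈ S, Polynomial.rootMultiplicity w q ≤ n + 2 := by
    calc ∑ w ∈ S, Polynomial.rootMultiplicity w q = ∑ w ∈ S, q.roots.count w :=
          Finset.sum_congr rfl fun w _ => (Polynomial.count_roots q).symm
      _ ≤ ∑ w ∈ q.roots.toFinset, q.roots.count w := Finset.sum_le_sum_of_subset hSsub
      _ = Multiset.card q.roots := Multiset.toFinset_sum_count_eq _
      _ ≤ q.natDegree := q.card_roots'
      _ ≤ n + 2 := hdeg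
  have h2 : ∑ w ∈ S, Polynomial.rootMultiplicity w (derivative q) = n + 1 := by
    calc ∑ w ∈ S, Polynomial.rootMultiplicity w (derivative q)
        = ∑ w ∈ S, (derivative q).roots.count w :=
          Finset.sum_congr rfl fun w _ => (Polynomial.count_roots _).symm
      _ = ∑ w ∈ M.toFinset, M.count w := by rw [hroots]
      _ = Multiset.card M := Multiset.toFinset_sum_count_eq _
      _ = n + 1 := hcardM
  have h3 : ∀ w ∈ S, Polynomial.rootMultiplicity w q
      = Polynomial.rootMultiplicity w (derivative q) + 1 := by
    intro w hw
    have hr : q.IsRoot w := by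
      obtain ⟨i, _, rfl⟩ := Multiset.mem_map.mp (Multiset.mem_toFinset.mp hw)
      exact hisroot i
    have hpos : 0 < Polynomial.rootMultiplicity w q :=
      (Polynomial.rootMultiplicity_pos hq0).mpr hr
    have hder := Polynomial.derivative_rootMultiplicity_of_root hr
    omega
  have hcount : n + 1 + S.card ≤ n + 2 := by
    calc n + 1 + S.card = ∑ w ∈ S, (Polynomial.rootMultiplicity w (derivative q) + 1) := by
          rw [Finset.sum_add_distrib, Finset.sum_const, h2, smul_eq_mul, mul_one]
      _ = ∑ w ∈ S, Polynomial.rootMultiplicity w q := (Finset.sum_congr rfl h3).symm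
      _ ≤ n + 2 := h1
  have hScard : S.card ≤ 1 := by omega
  have h0S : (0 : K) ∈ S := by
    rw [hS, Multiset.mem_toFinset, hM]
    exact Multiset.mem_map.mpr ⟨0, by simp, crit_zero c⟩
  have hall : ∀ i : Fin (n + 1), crit c i = 0 := by
    intro i
    have hiS : crit c i ∈ S := by
      rw [hS, Multiset.mem_toFinset, hM]
      exact Multiset.mem_map.mpr ⟨i, by simp, rfl⟩
    exact Finset.card_le_one.mp hScard _ hiS _ h0S
  funext j
  have := hall j.succ
  rwa [crit_succ] at this

/-! ### The multivariate polynomials realizing the critical values -/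

/-- Elementary symmetric polynomial in the first `n` of the `n+1` variables. -/
def Ep (n k : ℕ) : MvPolynomial (Fin (n + 1)) K :=
  ∑ s ∈ Finset.powersetCard k (Finset.univ : Finset (Fin n)),
    ∏ i ∈ s, MvPolynomial.X i.castSucc

/-- Critical point `i` as a variable. -/
def critP (n : ℕ) (i : Fin (n + 1)) : MvPolynomial (Fin (n + 1)) K :=
  if h : (i : ℕ) = 0 then 0
  else MvPolynomial.X (Fin.castSucc ⟨(i : ℕ) - 1, by have := i.isLt; omega⟩)

/-- Critical value `i` as a polynomial in `(c, a)`. -/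
def Fp (n : ℕ) (i : Fin (n + 1)) : MvPolynomial (Fin (n + 1)) K :=
  MvPolynomial.C (((n + 2 : ℕ) : K))⁻¹ * (critP n i) ^ (n + 2)
    + ∑ j ∈ Finset.Icc 2 (n + 1),
        MvPolynomial.C ((-1 : K) ^ (n + 2 - j) * ((j : ℕ) : K)⁻¹) * Ep n (n + 2 - j)
          * (critP n i) ^ j
    + (MvPolynomial.X (Fin.last n)) ^ (n + 2)

lemma eval_Ep {n : ℕ} (c : Fin n → K) (a : K) (k : ℕ) :
    MvPolynomial.eval (Fin.snoc c a) (Ep n k : MvPolynomial (Fin (n + 1)) K) = esymmK c k := by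
  rw [Ep, esymmK, map_sum]
  refine Finset.sum_congr rfl fun s _ => ?_
  rw [map_prod]
  exact Finset.prod_congr rfl fun i _ => by rw [MvPolynomial.eval_X, Fin.snoc_castSucc]

lemma eval_critP {n : ℕ} (c : Fin n → K) (a : K) (i : Fin (n + 1)) :
    MvPolynomial.eval (Fin.snoc c a) (critP n i : MvPolynomial (Fin (n + 1)) K) = crit c i := by
  by_cases h : (i : ℕ) = 0
  · simp [critP, crit, h]
  · rw [critP, dif_neg h, crit, dif_neg h, MvPolynomial.eval_X, Fin.snoc_castSucc]

lemma eval_Fp {n : ℕ} (c : Fin n → K) (a : K) (i : Fin (n + 1)) :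
    MvPolynomial.eval (Fin.snoc c a) (Fp n i : MvPolynomial (Fin (n + 1)) K)
      = Pca c a (crit c i) := by
  rw [Fp, Pca]
  simp only [map_add, map_mul, map_pow, MvPolynomial.eval_C, map_sum, eval_critP, eval_Ep,
    MvPolynomial.eval_X, Fin.snoc_last]
  congr 1
  congr 1
  · rw [div_eq_mul_inv, mul_comm]
  · refine Finset.sum_congr rfl fun j _ => ?_
    rw [div_eq_mul_inv]
    ring

end St9

/-- there is a constant `0 < β_v ≤ 1` such that for every `(c,a) ∈ K^{d-1}`,
`max_{0≤j≤d-2} |P_{c,a}(c_j)|_v ≥ β_v · max{|c|_v, |a|_v}^d`, with `d = n + 2`. -/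
theorem statement9 {K : Type*} [Field K] [IsAlgClosed K] [CharZero K]
    (v : AbsoluteValue K ℝ) (hv : ∀ x y : K, v (x + y) ≤ max (v x) (v y)) (n : ℕ) :
    ∃ β : ℝ, 0 < β ∧ β ≤ 1 ∧
      ∀ (c : Fin n → K) (a : K),
        β * max (cnorm v c) (v a) ^ (n + 2)
          ≤ Finset.univ.sup' Finset.univ_nonempty
              fun j : Fin (n + 1) => v (Pca c a (crit c j)) := by
  classical
  set F : Fin (n + 1) → MvPolynomial (Fin (n + 1)) K := St9.Fp n with hF
  -- the common zero locus of the `F i` is the origin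
  have hzl : ∀ x ∈ MvPolynomial.zeroLocus K (Ideal.span (Set.range F)), x = 0 := by
    intro x hx
    have hx' : ∀ i, MvPolynomial.eval x (F i) = 0 := fun i =>
      hx (F i) (Ideal.subset_span (Set.mem_range_self i))
    set c0 : Fin n → K := fun j => x j.castSucc with hc0
    have hxe : x = Fin.snoc c0 (x (Fin.last n)) := by
      funext j
      refine Fin.lastCases ?_ (fun i => ?_) j
      · rw [Fin.snoc_last]
      · rw [Fin.snoc_castSucc]
    have hcrit : ∀ i, Pca c0 (x (Fin.last n)) (crit c0 i) = 0 := by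
      intro i
      rw [← St9.eval_Fp, ← hxe]
      exact hx' i
    obtain ⟨hc, ha⟩ := St9.only_zero c0 (x (Fin.last n)) hcrit
    funext j
    refine Fin.lastCases ?_ (fun i => ?_) j
    · simpa using ha
    · simpa using congrFun hc i
  -- Nullstellensatz certificates
  have hrad : ∀ k : Fin (n + 1), ∃ N : ℕ, ∃ g : Fin (n + 1) → MvPolynomial (Fin (n + 1)) K,
      ∑ i, g i * F i = (MvPolynomial.X k) ^ N := by
    intro k
    have hmem : (MvPolynomial.X k : MvPolynomial (Fin (n + 1)) K) ∈
        (Ideal.span (Set.range F)).radical := by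
      rw [← MvPolynomial.vanishingIdeal_zeroLocus_eq_radical (K := K),
        MvPolynomial.mem_vanishingIdeal_iff]
      intro x hx
      rw [MvPolynomial.aeval_X, hzl x hx]
      rfl
    obtain ⟨N, hN⟩ := hmem
    rw [Ideal.mem_span_range_iff_exists_fun] at hN
    obtain ⟨g, hg⟩ := hN
    exact ⟨N, g, hg⟩
  choose N g hg using hrad
  -- bounds for the certificate polynomials
  have hgb : ∀ k i : Fin (n + 1), ∃ B : ℝ, 1 ≤ B ∧ ∀ x : Fin (n + 1) → K,
      (∀ j, v (x j) ≤ 1) → v (MvPolynomial.eval x (g k i)) ≤ B :=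
    fun k i => St9.eval_bound v hv (g k i)
  choose B hB1 hB2 using hgb
  set Bb : ℝ := Finset.univ.sup' Finset.univ_nonempty
    (fun p : Fin (n + 1) × Fin (n + 1) => B p.1 p.2) with hBb
  have hBb1 : (1 : ℝ) ≤ Bb := by
    refine le_trans (hB1 0 0) ?_
    exact Finset.le_sup' (fun p : Fin (n + 1) × Fin (n + 1) => B p.1 p.2)
      (Finset.mem_univ ((0 : Fin (n + 1)), (0 : Fin (n + 1))))
  have hBb0 : (0 : ℝ) < Bb := lt_of_lt_of_le one_pos hBb1
  refine ⟨Bb⁻¹, inv_pos.mpr hBb0, ?_, ?_⟩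
  · rw [inv_le_one_iff₀]
    right
    exact hBb1
  intro c a
  set f : Fin (n + 1) → ℝ := fun j => v (Pca c a (crit c j)) with hfdef
  have hf0 : 0 ≤ Finset.univ.sup' Finset.univ_nonempty f :=
    le_trans (v.nonneg _) (Finset.le_sup' f (Finset.mem_univ 0))
  set Mx : ℝ := max (cnorm v c) (v a) with hMx
  have hMx0 : 0 ≤ Mx := le_trans (St9.cnorm_nonneg v c) (le_max_left _ _)
  by_cases hM0 : Mx ≤ 0
  · have hMz : Mx = 0 := le_antisymm hM0 hMx0
    rw [hMz, zero_pow (by omega : n + 2 ≠ 0), mul_zero]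
    exact hf0
  push_neg at hM0
  -- find a coordinate realizing the max
  set y : Fin (n + 1) → K := Fin.snoc c a with hy
  have hT : ∃ k : Fin (n + 1), v (y k) = Mx := by
    rcases le_total (cnorm v c) (v a) with h | h
    · exact ⟨Fin.last n, by rw [hy, Fin.snoc_last, hMx, max_eq_right h]⟩
    · have hMc : Mx = cnorm v c := max_eq_left h
      rcases St9.cnorm_attained v c with h0 | ⟨i, he⟩
      · exact absurd (hMc.trans h0) (ne_of_gt hM0)
      · exact ⟨i.castSucc, by rw [hy, Fin.snoc_castSucc, hMc, he]⟩
  obtain ⟨k0, hk0⟩ := hT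
  have htne : y k0 ≠ 0 := by
    intro h0
    rw [h0, v.map_zero] at hk0
    exact ne_of_gt hM0 hk0.symm
  set s : K := (y k0)⁻¹ with hs
  have hvs : v s * Mx = 1 := by
    rw [← hk0, ← v.map_mul, inv_mul_cancel₀ htne, v.map_one]
  have hvsn : 0 ≤ v s := v.nonneg s
  set x : Fin (n + 1) → K := Fin.snoc (fun j => s * c j) (s * a) with hx
  have hxy : ∀ j, x j = s * y j := by
    intro j
    refine Fin.lastCases ?_ (fun i => ?_) j <;> simp [hx, hy]
  have hxle : ∀ j, v (x j) ≤ 1 := by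
    intro j
    refine Fin.lastCases ?_ (fun i => ?_) j
    · rw [hxy, hy, Fin.snoc_last, v.map_mul]
      calc v s * v a ≤ v s * Mx := mul_le_mul_of_nonneg_left (le_max_right _ _) hvsn
        _ = 1 := hvs
    · rw [hxy, hy, Fin.snoc_castSucc, v.map_mul]
      calc v s * v (c i) ≤ v s * Mx :=
            mul_le_mul_of_nonneg_left
              (le_trans (St9.v_le_cnorm v c i) (le_max_left _ _)) hvsn
        _ = 1 := hvs
  have hvk : v (x k0) = 1 := by
    rw [hxy, v.map_mul, hk0, hvs]
  -- normalized lower bound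
  set S0 : ℝ := Finset.univ.sup' Finset.univ_nonempty
    (fun i : Fin (n + 1) => v (MvPolynomial.eval x (F i))) with hS0
  have hS0nn : 0 ≤ S0 := by
    refine le_trans (v.nonneg (MvPolynomial.eval x (F 0))) ?_
    exact Finset.le_sup' (fun i : Fin (n + 1) => v (MvPolynomial.eval x (F i)))
      (Finset.mem_univ (0 : Fin (n + 1)))
  have hkey : (1 : ℝ) ≤ Bb * S0 := by
    calc (1 : ℝ) = v (MvPolynomial.eval x (∑ i, g k0 i * F i)) := by
          rw [hg k0, map_pow, MvPolynomial.eval_X, v.map_pow, hvk, one_pow]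
      _ ≤ Bb * S0 := by
          rw [map_sum]
          refine St9.v_sum_le v hv _ _ (mul_nonneg (le_of_lt hBb0) hS0nn) ?_
          intro i _
          rw [map_mul, v.map_mul]
          refine mul_le_mul ?_ ?_ (v.nonneg _) (le_of_lt hBb0)
          · refine le_trans (hB2 k0 i x hxle) ?_
            exact Finset.le_sup' (fun p : Fin (n + 1) × Fin (n + 1) => B p.1 p.2)
              (Finset.mem_univ (k0, i))
          · exact Finset.le_sup' (fun i : Fin (n + 1) => v (MvPolynomial.eval x (F i)))
              (Finset.mem_univ i)
  -- homogeneity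
  have hFi : ∀ i, MvPolynomial.eval x (F i) = s ^ (n + 2) * Pca c a (crit c i) := by
    intro i
    rw [hF, hx, St9.eval_Fp, St9.crit_smul, St9.Pca_smul]
  have hS0le : S0 ≤ v s ^ (n + 2) * Finset.univ.sup' Finset.univ_nonempty f := by
    refine Finset.sup'_le _ _ fun i _ => ?_
    rw [hFi i, v.map_mul, v.map_pow]
    exact mul_le_mul_of_nonneg_left (Finset.le_sup' f (Finset.mem_univ i))
      (pow_nonneg hvsn _)
  have hvs2 : v s ^ (n + 2) * Mx ^ (n + 2) = 1 := by
    rw [← mul_pow, hvs, one_pow]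
  have hMp : (0 : ℝ) < Mx ^ (n + 2) := pow_pos hM0 _
  have hfinal : Mx ^ (n + 2) ≤ Bb * Finset.univ.sup' Finset.univ_nonempty f := by
    have hkey2 : (1 : ℝ) ≤ Bb * (v s ^ (n + 2) * Finset.univ.sup' Finset.univ_nonempty f) :=
      le_trans hkey (mul_le_mul_of_nonneg_left hS0le (le_of_lt hBb0))
    have hmul := mul_le_mul_of_nonneg_left hkey2 (le_of_lt hMp)
    rw [mul_one] at hmul
    calc Mx ^ (n + 2)
        ≤ Mx ^ (n + 2) * (Bb * (v s ^ (n + 2) * Finset.univ.sup' Finset.univ_nonempty f)) :=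
          hmul
      _ = (v s ^ (n + 2) * Mx ^ (n + 2)) * (Bb * Finset.univ.sup' Finset.univ_nonempty f) := by
          ring
      _ = Bb * Finset.univ.sup' Finset.univ_nonempty f := by rw [hvs2, one_mul]
  calc Bb⁻¹ * Mx ^ (n + 2)
      ≤ Bb⁻¹ * (Bb * Finset.univ.sup' Finset.univ_nonempty f) :=
        mul_le_mul_of_nonneg_left hfinal (inv_nonneg.mpr (le_of_lt hBb0))
    _ = Finset.univ.sup' Finset.univ_nonempty f := by
        rw [← mul_assoc, inv_mul_cancel₀ (ne_of_gt hBb0), one_mul]
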